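/- Let α ∈ (0,1), and suppose F : [0,T] → L^p(Ω;ℝ^d) is continuous and there exist K > 0, μ ∈ [0,1) and ν ∈ [0,1) such that ‖F(t) − F(s)‖_{L^p} ≤ K·s^{−μ}·(t−s)^{ν} for all 0 < s < t ≤ T. Then for every sufficiently small ε > 0 there exists a constant C > 0, independent of s and t, such that for all 0 < s < t ≤ T: (i) if ν ≠ α, then ‖Λ_F(t) − Λ_F(s)‖_{L^p} ≤ C·(t^{1−α} − s^{1−α}) + C·s^{−μ}·(t−s)^{min{1−α+ν, 1}}; (ii) if ν = α, then ‖Λ_F(t) − Λ_F(s)‖_{L^p} ≤ C·(t^{1−α} − s^{1−α}) + C·s^{−μ}·(t−s)^{1−ε}. -/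

import Mathlib

open MeasureTheory Set intervalIntegral
open scoped ENNReal

namespace Stmt2Aux

lemma II_rpow_sub {r : ℝ} (hr : -1 < r) (c a b : ℝ) :
    IntervalIntegrable (fun u => (c - u) ^ r) volume a b := by
  have h := (intervalIntegral.intervalIntegrable_rpow' (a := c - a) (b := c - b) hr).comp_sub_left c
  simpa using h

lemma int_rpow_sub {r : ℝ} (hr : -1 < r) (c a b : ℝ) :
    ∫ u in a..b, (c - u) ^ r = ((c - a) ^ (r + 1) - (c - b) ^ (r + 1)) / (r + 1) := by
  rw [intervalIntegral.integral_comp_sub_left (fun x => x ^ r) c,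
      integral_rpow (Or.inl hr)]

lemma int_rpow_sub_γ {α : ℝ} (hα1 : α < 1) (c a b : ℝ) :
    ∫ u in a..b, (c - u) ^ (-α) = ((c - a) ^ (1 - α) - (c - b) ^ (1 - α)) / (1 - α) := by
  have h := int_rpow_sub (r := -α) (by linarith) c a b
  rw [show -α + 1 = 1 - α by ring] at h
  exact h

lemma key_ineq {α x y : ℝ} (hα0 : 0 < α) (hα1 : α < 1) (hx : 0 < x) (hxy : x ≤ y) :
    x ^ (-α) - y ^ (-α) ≤ α * (y - x) * x ^ (-α - 1) := by
  have hy : 0 < y := lt_of_lt_of_le hx hxy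
  have hw : 1 ≤ y / x := (one_le_div hx).mpr hxy
  have hb : (y / x) ^ α ≤ 1 + α * (y / x - 1) := by
    have h := rpow_one_add_le_one_add_mul_self (s := y / x - 1) (by linarith)
      hα0.le hα1.le
    rwa [show 1 + (y / x - 1) = y / x by ring] at h
  have hz1 : 1 ≤ (y / x) ^ α := Real.one_le_rpow hw hα0.le
  have hz0 : 0 < (y / x) ^ α := by positivity
  have hneg : (y / x) ^ (-α) = ((y / x) ^ α)⁻¹ := Real.rpow_neg (by positivity) α
  have h1 : 1 - (y / x) ^ (-α) ≤ α * (y / x - 1) := by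
    rw [hneg]
    have h3 : 1 - ((y / x) ^ α)⁻¹ ≤ (y / x) ^ α - 1 := by
      have h2 : ((y / x) ^ α)⁻¹ * (y / x) ^ α = 1 := inv_mul_cancel₀ hz0.ne'
      nlinarith
    linarith
  have hdiv : (y / x) ^ (-α) = y ^ (-α) / x ^ (-α) := Real.div_rpow hy.le hx.le _
  have hxa : 0 < x ^ (-α) := Real.rpow_pos_of_pos hx _
  have h2 : x ^ (-α) - y ^ (-α) = x ^ (-α) * (1 - (y / x) ^ (-α)) := by
    rw [hdiv]; field_simp
  have h3 : x ^ (-α) * (α * (y / x - 1)) = α * (y - x) * x ^ (-α - 1) := by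
    have h4 : x ^ (-α - 1) = x ^ (-α) * x⁻¹ := by
      rw [show -α - 1 = -α + -1 by ring, Real.rpow_add hx, Real.rpow_neg_one]
    rw [h4]; field_simp
  rw [h2, ← h3]
  exact mul_le_mul_of_nonneg_left h1 hxa.le

lemma norm_int_le' {E : Type*} [NormedAddCommGroup E] [NormedSpace ℝ E]
    {f : ℝ → E} {g : ℝ → ℝ} {a b : ℝ} (hab : a ≤ b)
    (hInt0 : 0 ≤ ∫ u in a..b, g u)
    (h : ∀ u ∈ Set.Ioo a b, ‖f u‖ ≤ g u)
    (hg : IntervalIntegrable g volume a b) :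
    ‖∫ u in a..b, f u‖ ≤ ∫ u in a..b, g u := by
  have h' : ∀ᵐ u ∂(volume.restrict (Set.uIoc a b)), ‖f u‖ ≤ g u := by
    rw [uIoc_of_le hab]
    refine (ae_restrict_iff' measurableSet_Ioc).mpr ?_
    have hne : ∀ᵐ (u : ℝ) ∂volume, u ≠ b := by
      rw [ae_iff]
      simpa using measure_singleton (α := ℝ) (μ := volume) b
    filter_upwards [hne] with u hub hu
    exact h u ⟨hu.1, lt_of_le_of_ne hu.2 hub⟩
  have hle := intervalIntegral.norm_integral_le_abs_of_norm_le h' hg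
  rwa [abs_of_nonneg hInt0] at hle

lemma II_smul_const {E : Type*} [NormedAddCommGroup E] [NormedSpace ℝ E]
    {f : ℝ → ℝ} {a b : ℝ} (hf : IntervalIntegrable f volume a b) (c : E) :
    IntervalIntegrable (fun u => f u • c) volume a b :=
  ⟨hf.1.smul_const c, hf.2.smul_const c⟩

lemma II_vec {E : Type*} [NormedAddCommGroup E] [NormedSpace ℝ E]
    {F : ℝ → E} {T M : ℝ}
    (hFm : AEStronglyMeasurable F (volume.restrict (Icc 0 T)))
    (hM : ∀ u ∈ Icc (0:ℝ) T, ‖F u‖ ≤ M)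
    {α : ℝ} (hα1 : α < 1)
    {a b c : ℝ} (ha : 0 ≤ a) (hab : a ≤ b) (hbT : b ≤ T) (hbc : b ≤ c) :
    IntervalIntegrable (fun u => (c - u) ^ (-α) • F u) volume a b := by
  rw [intervalIntegrable_iff_integrableOn_Ioc_of_le hab]
  have hsub : Ioc a b ⊆ Icc 0 T := fun u hu => ⟨le_trans ha hu.1.le, le_trans hu.2 hbT⟩
  have hFm' : AEStronglyMeasurable F (volume.restrict (Ioc a b)) :=
    hFm.mono_measure (Measure.restrict_mono hsub le_rfl)
  have hsm : AEStronglyMeasurable (fun u => (c - u) ^ (-α) • F u)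
      (volume.restrict (Ioc a b)) := by
    refine AEStronglyMeasurable.smul ?_ hFm'
    exact ((measurable_const.sub measurable_id).pow_const _).aestronglyMeasurable
  have hbd : IntegrableOn (fun u => M * (c - u) ^ (-α)) (Ioc a b) volume := by
    have h := (II_rpow_sub (r := -α) (by linarith) c a b).const_mul M
    rwa [intervalIntegrable_iff_integrableOn_Ioc_of_le hab] at h
  refine Integrable.mono' hbd hsm ?_
  refine (ae_restrict_iff' measurableSet_Ioc).mpr (ae_of_all _ fun u hu => ?_)
  have hcu : 0 ≤ c - u := by linarith [hu.2, hbc]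
  have h1 : (0:ℝ) ≤ (c - u) ^ (-α) := Real.rpow_nonneg hcu _
  rw [norm_smul, Real.norm_eq_abs, abs_of_nonneg h1]
  calc (c - u) ^ (-α) * ‖F u‖ ≤ (c - u) ^ (-α) * M :=
        mul_le_mul_of_nonneg_left (hM u (hsub hu)) h1
    _ = M * (c - u) ^ (-α) := mul_comm _ _

lemma rpow_subadd {x y p : ℝ} (hx : 0 ≤ x) (hy : 0 ≤ y) (hp0 : 0 ≤ p) (hp1 : p ≤ 1) :
    (x + y) ^ p ≤ x ^ p + y ^ p := by
  have h := NNReal.rpow_add_le_add_rpow (x.toNNReal) (y.toNNReal) hp0 hp1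
  have hco := NNReal.coe_le_coe.mpr h
  push_cast [NNReal.coe_rpow] at hco
  rwa [Real.coe_toNNReal x hx, Real.coe_toNNReal y hy] at hco

end Stmt2Aux

open Stmt2Aux

set_option maxHeartbeats 2000000 in
/-- Regularity of the singular convolution `Λ_F` (Proposition `prop.convo`). -/
theorem stmt2
    {Ω : Type*} [MeasurableSpace Ω] (P : Measure Ω) [IsProbabilityMeasure P]
    (d : ℕ) (hd : 1 ≤ d) (p : ℝ≥0∞) [Fact (1 ≤ p)] (hp : 2 ≤ p)
    (T : ℝ) (hT : 0 < T) (α : ℝ) (hα : α ∈ Ioo (0:ℝ) 1)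
    (F : ℝ → Lp (EuclideanSpace ℝ (Fin d)) p P)
    (hFcont : ContinuousOn F (Icc 0 T))
    (K μ ν : ℝ) (hK : 0 < K) (hμ : μ ∈ Ico (0:ℝ) 1) (hν : ν ∈ Ico (0:ℝ) 1)
    (hF : ∀ s t : ℝ, 0 < s → s < t → t ≤ T →
      ‖F t - F s‖ ≤ K * s ^ (-μ) * (t - s) ^ ν) :
    ∃ ε₀ > (0:ℝ), ∀ ε : ℝ, 0 < ε → ε < ε₀ → ∃ C > (0:ℝ), ∀ s t : ℝ,
      0 < s → s < t → t ≤ T →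
      (ν ≠ α →
        ‖(∫ u in (0:ℝ)..t, ((t - u) ^ (-α)) • F u)
            - ∫ u in (0:ℝ)..s, ((s - u) ^ (-α)) • F u‖
          ≤ C * (t ^ (1 - α) - s ^ (1 - α))
            + C * s ^ (-μ) * (t - s) ^ (min (1 - α + ν) 1)) ∧
      (ν = α →
        ‖(∫ u in (0:ℝ)..t, ((t - u) ^ (-α)) • F u)
            - ∫ u in (0:ℝ)..s, ((s - u) ^ (-α)) • F u‖
          ≤ C * (t ^ (1 - α) - s ^ (1 - α))
            + C * s ^ (-μ) * (t - s) ^ (1 - ε)) := by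
  obtain ⟨hα0, hα1⟩ := hα
  obtain ⟨hμ0, hμ1⟩ := hμ
  obtain ⟨hν0, hν1⟩ := hν
  have hγ0 : (0:ℝ) < 1 - α := by linarith
  have h1μ : (0:ℝ) < 1 - μ := by linarith
  have h1να : (0:ℝ) < 1 + ν - α := by linarith
  have hγne : (1:ℝ) - α ≠ 0 := hγ0.ne'
  have hrα : (-1:ℝ) < -α := by linarith
  obtain ⟨M, hM⟩ := isCompact_Icc.exists_bound_of_continuousOn hFcont
  have hM0 : 0 ≤ M := le_trans (norm_nonneg (F 0)) (hM 0 ⟨le_rfl, hT.le⟩)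
  have hFm : AEStronglyMeasurable F (volume.restrict (Icc 0 T)) :=
    hFcont.aestronglyMeasurable measurableSet_Icc
  refine ⟨1, one_pos, fun ε hε0 hε1 => ?_⟩
  set Q := max 1 T with hQdef
  have hQ1 : (1:ℝ) ≤ Q := le_max_left _ _
  have hTQ : T ≤ Q := le_max_right _ _
  have hQ0 : (0:ℝ) < Q := lt_of_lt_of_le one_pos hQ1
  have hr1 : (0:ℝ) ≤ K/(1-α) := div_nonneg hK.le hγ0.le
  have hr2 : (0:ℝ) ≤ K*α*2^μ/(1-μ) := div_nonneg (by positivity) h1μ.le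
  have hr3 : (0:ℝ) ≤ K*α*2^μ*(|α-ν|⁻¹ + 1/ε) := by positivity
  have hr4 : (0:ℝ) ≤ K*2^μ/(1+ν-α) := div_nonneg (by positivity) h1να.le
  have hQ30 : (0:ℝ) ≤ Q^3 := by positivity
  have hA0 : (0:ℝ) ≤ M/(1-α) := div_nonneg hM0 hγ0.le
  have hA1 : (0:ℝ) ≤ (2*M/(1-α))*(3^α/(1-α)) :=
    mul_nonneg (div_nonneg (by linarith) hγ0.le) (div_nonneg (by positivity) hγ0.le)
  set C := 1 + M/(1-α) + (2*M/(1-α))*(3^α/(1-α))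
      + Q^3*(K/(1-α) + K*α*2^μ/(1-μ) + K*α*2^μ*(|α-ν|⁻¹ + 1/ε) + K*2^μ/(1+ν-α)) with hCdef
  have hQsum0 : (0:ℝ) ≤ Q^3*(K/(1-α) + K*α*2^μ/(1-μ) + K*α*2^μ*(|α-ν|⁻¹ + 1/ε)
      + K*2^μ/(1+ν-α)) := mul_nonneg hQ30 (by linarith)
  have hC0 : 0 < C := by rw [hCdef]; linarith only [hQsum0, hA0, hA1]
  have hQ23 : Q^2 ≤ Q^3 := pow_le_pow_right₀ hQ1 (by norm_num)
  have hQ13 : Q ≤ Q^3 := by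
    calc Q = Q^1 := (pow_one Q).symm
      _ ≤ Q^3 := pow_le_pow_right₀ hQ1 (by norm_num)
  have hcA : M/(1-α) + (2*M/(1-α))*(3^α/(1-α)) ≤ C := by
    rw [hCdef]; linarith only [hQsum0]
  have hcB1 : (K/(1-α))*Q^2 ≤ C := by
    rw [hCdef]
    have e1 := mul_le_mul_of_nonneg_left hQ23 hr1
    have e2 := mul_nonneg hQ30 hr2
    have e3 := mul_nonneg hQ30 hr3
    have e4 := mul_nonneg hQ30 hr4
    have hring : Q^3*(K/(1-α) + K*α*2^μ/(1-μ) + K*α*2^μ*(|α-ν|⁻¹ + 1/ε) + K*2^μ/(1+ν-α))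
        = K/(1-α)*Q^3 + Q^3*(K*α*2^μ/(1-μ)) + Q^3*(K*α*2^μ*(|α-ν|⁻¹ + 1/ε))
          + Q^3*(K*2^μ/(1+ν-α)) := by ring
    linarith only [e1, e2, e3, e4, hring, hA0, hA1]
  have hcB : (K/(1-α))*Q^2 + (K*α*2^μ/(1-μ))*Q + (K*α*2^μ*(|α-ν|⁻¹ + 1/ε))*Q
      + (K*2^μ/(1+ν-α))*Q^2 ≤ C := by
    rw [hCdef]
    have e1 := mul_le_mul_of_nonneg_left hQ23 hr1
    have e2 := mul_le_mul_of_nonneg_left hQ13 hr2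
    have e3 := mul_le_mul_of_nonneg_left hQ13 hr3
    have e4 := mul_le_mul_of_nonneg_left hQ23 hr4
    have hring : Q^3*(K/(1-α) + K*α*2^μ/(1-μ) + K*α*2^μ*(|α-ν|⁻¹ + 1/ε) + K*2^μ/(1+ν-α))
        = K/(1-α)*Q^3 + K*α*2^μ/(1-μ)*Q^3 + K*α*2^μ*(|α-ν|⁻¹ + 1/ε)*Q^3
          + K*2^μ/(1+ν-α)*Q^3 := by ring
    linarith only [e1, e2, e3, e4, hring, hA0, hA1]
  refine ⟨C, hC0, fun s t hs hst htT => ?_⟩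
  -- basic facts
  have hsT : s ≤ T := le_trans hst.le htT
  have ht0 : 0 < t := lt_trans hs hst
  have hδ0 : 0 < t - s := by linarith
  have hδT : t - s ≤ T := by linarith
  have hδQ : t - s ≤ Q := le_trans hδT hTQ
  have hσ0 : 0 < s ^ (-μ) := Real.rpow_pos_of_pos hs _
  have hX0 : 0 ≤ t ^ (1-α) - s ^ (1-α) := by
    have h := Real.rpow_le_rpow hs.le hst.le hγ0.le
    linarith
  have hs2 : 0 < s/2 := by linarith
  have hs2Q : s/2 ≤ Q := by linarith [le_trans hsT hTQ]
  -- integrabilities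
  have hI1 : IntervalIntegrable (fun u => (t-u)^(-α) • F u) volume 0 s :=
    II_vec hFm hM hα1 le_rfl hs.le hsT hst.le
  have hI2 : IntervalIntegrable (fun u => (t-u)^(-α) • F u) volume s t :=
    II_vec hFm hM hα1 hs.le hst.le htT le_rfl
  have hI3 : IntervalIntegrable (fun u => (s-u)^(-α) • F u) volume 0 s :=
    II_vec hFm hM hα1 le_rfl hs.le hsT le_rfl
  have hS1 : IntervalIntegrable (fun u => (t-u)^(-α)) volume 0 s := II_rpow_sub hrα t 0 s
  have hS2 : IntervalIntegrable (fun u => (s-u)^(-α)) volume 0 s := II_rpow_sub hrα s 0 s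
  have hS3 : IntervalIntegrable (fun u => (t-u)^(-α)) volume s t := II_rpow_sub hrα t s t
  have hGdeq : (fun u => ((t-u)^(-α) - (s-u)^(-α)) • (F u - F s))
      = fun u => ((t-u)^(-α) • F u - (s-u)^(-α) • F u)
        - ((t-u)^(-α) - (s-u)^(-α)) • F s := by
    funext u; module
  have hG3eq : (fun u => (t-u)^(-α) • (F u - F s))
      = fun u => (t-u)^(-α) • F u - (t-u)^(-α) • F s := by
    funext u; simp only [smul_sub]
  have hGdI : IntervalIntegrable (fun u => ((t-u)^(-α) - (s-u)^(-α)) • (F u - F s))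
      volume 0 s := by
    rw [hGdeq]; exact (hI1.sub hI3).sub (II_smul_const (hS1.sub hS2) (F s))
  have hG3I : IntervalIntegrable (fun u => (t-u)^(-α) • (F u - F s)) volume s t := by
    rw [hG3eq]; exact hI2.sub (II_smul_const hS3 (F s))
  -- decomposition
  have hD : (∫ u in (0:ℝ)..t, ((t - u) ^ (-α)) • F u)
      - ∫ u in (0:ℝ)..s, ((s - u) ^ (-α)) • F u
      = (∫ u in (0:ℝ)..s, ((t-u)^(-α) - (s-u)^(-α)) • (F u - F s))
        + (∫ u in s..t, (t-u)^(-α) • (F u - F s))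
        + ((t^(1-α) - s^(1-α))/(1-α)) • F s := by
    have hsplit := integral_add_adjacent_intervals hI1 hI2
    have e1 : (∫ u in (0:ℝ)..s, ((t-u)^(-α) - (s-u)^(-α)) • (F u - F s))
        = (∫ u in (0:ℝ)..s, (t-u)^(-α) • F u) - (∫ u in (0:ℝ)..s, (s-u)^(-α) • F u)
          - ((∫ u in (0:ℝ)..s, ((t-u)^(-α) - (s-u)^(-α))) • F s) := by
      rw [hGdeq, intervalIntegral.integral_sub (hI1.sub hI3)
            (II_smul_const (hS1.sub hS2) (F s)),
          intervalIntegral.integral_sub hI1 hI3, intervalIntegral.integral_smul_const]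
    have e2 : (∫ u in s..t, (t-u)^(-α) • (F u - F s))
        = (∫ u in s..t, (t-u)^(-α) • F u) - ((∫ u in s..t, (t-u)^(-α)) • F s) := by
      rw [hG3eq, intervalIntegral.integral_sub hI2 (II_smul_const hS3 (F s)),
          intervalIntegral.integral_smul_const]
    have c1 : (∫ u in (0:ℝ)..s, ((t-u)^(-α) - (s-u)^(-α)))
        = ((t^(1-α) - (t-s)^(1-α)) - s^(1-α))/(1-α) := by
      rw [intervalIntegral.integral_sub hS1 hS2, int_rpow_sub_γ hα1 t 0 s,
          int_rpow_sub_γ hα1 s 0 s]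
      simp only [sub_zero, sub_self, Real.zero_rpow hγne]
      ring
    have c2 : (∫ u in s..t, (t-u)^(-α)) = (t-s)^(1-α)/(1-α) := by
      rw [int_rpow_sub_γ hα1 t s t]
      simp only [sub_self, Real.zero_rpow hγne]
      ring
    rw [e1, e2, c1, c2, ← hsplit]
    module
  -- third-term bound
  have hT3n : ‖((t^(1-α) - s^(1-α))/(1-α)) • F s‖
      ≤ (M/(1-α)) * (t^(1-α) - s^(1-α)) := by
    rw [norm_smul, Real.norm_eq_abs, abs_of_nonneg (div_nonneg hX0 hγ0.le)]
    calc (t^(1-α)-s^(1-α))/(1-α) * ‖F s‖ ≤ (t^(1-α)-s^(1-α))/(1-α) * M :=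
          mul_le_mul_of_nonneg_left (hM s ⟨hs.le, hsT⟩) (div_nonneg hX0 hγ0.le)
      _ = (M/(1-α)) * (t^(1-α)-s^(1-α)) := by ring
  -- T2 bound
  have hT2n : ‖∫ u in s..t, (t-u)^(-α) • (F u - F s)‖
      ≤ (K/(1-α)) * (s^(-μ) * ((t-s)^ν * (t-s)^(1-α))) := by
    have hint : ∫ u in s..t, (K * s^(-μ) * (t-s)^ν) * (t-u)^(-α)
        = (K * s^(-μ) * (t-s)^ν) * ((t-s)^(1-α)/(1-α)) := by
      rw [intervalIntegral.integral_const_mul, int_rpow_sub_γ hα1 t s t]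
      simp only [sub_self, Real.zero_rpow hγne]
      ring
    have hg0 : (0:ℝ) ≤ K * s^(-μ) * (t-s)^ν :=
      mul_nonneg (mul_nonneg hK.le hσ0.le) (Real.rpow_nonneg hδ0.le _)
    have hb := norm_int_le' (f := fun u => (t-u)^(-α) • (F u - F s))
        (g := fun u => (K * s^(-μ) * (t-s)^ν) * (t-u)^(-α)) hst.le
        (by rw [hint]
            exact mul_nonneg hg0 (div_nonneg (Real.rpow_nonneg hδ0.le _) hγ0.le))
        (fun u hu => by
          have hu1 : s < u := hu.1
          have hu2 : u < t := hu.2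
          have htu : (0:ℝ) ≤ t - u := by linarith
          have h1 : (0:ℝ) ≤ (t-u)^(-α) := Real.rpow_nonneg htu _
          rw [norm_smul, Real.norm_eq_abs, abs_of_nonneg h1]
          have hFb : ‖F u - F s‖ ≤ K * s^(-μ) * (u - s)^ν :=
            hF s u hs hu1 (le_of_lt (lt_of_lt_of_le hu2 htT))
          have hνb : (u-s)^ν ≤ (t-s)^ν :=
            Real.rpow_le_rpow (by linarith) (by linarith) hν0
          calc (t-u)^(-α) * ‖F u - F s‖
              ≤ (t-u)^(-α) * (K * s^(-μ) * (t-s)^ν) := by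
                refine mul_le_mul_of_nonneg_left ?_ h1
                calc ‖F u - F s‖ ≤ K * s^(-μ) * (u-s)^ν := hFb
                  _ ≤ K * s^(-μ) * (t-s)^ν :=
                      mul_le_mul_of_nonneg_left hνb (mul_nonneg hK.le hσ0.le)
            _ = (K * s^(-μ) * (t-s)^ν) * (t-u)^(-α) := mul_comm _ _)
        ((II_rpow_sub hrα t s t).const_mul _)
    rw [hint] at hb
    refine le_trans hb (le_of_eq ?_)
    ring
  -- power-comparison helper
  have hpow : ∀ a b : ℝ, b ≤ a → a ≤ b + 2 → (t-s)^a ≤ Q^2 * (t-s)^b := by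
    intro a b hba hab2
    have h1 : (t-s)^a = (t-s)^b * (t-s)^(a-b) := by
      rw [← Real.rpow_add hδ0]; congr 1; ring
    rw [h1]
    have h2 : (t-s)^(a-b) ≤ Q^(a-b) := Real.rpow_le_rpow hδ0.le hδQ (by linarith)
    have h3 : Q^(a-b) ≤ Q^(2:ℝ) := Real.rpow_le_rpow_of_exponent_le hQ1 (by linarith)
    have h4 : Q^(2:ℝ) = Q^2 := by
      rw [show (2:ℝ) = ((2:ℕ):ℝ) by norm_num, Real.rpow_natCast]
    have h5 : (0:ℝ) ≤ (t-s)^b := Real.rpow_nonneg hδ0.le _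
    calc (t-s)^b * (t-s)^(a-b) ≤ (t-s)^b * Q^2 := by
          refine mul_le_mul_of_nonneg_left ?_ h5
          rw [← h4]; exact le_trans h2 h3
      _ = Q^2 * (t-s)^b := mul_comm _ _
  have h2μ : (s/2)^(-μ) = 2^μ * s^(-μ) := by
    rw [show s/2 = s * 2⁻¹ by ring, Real.mul_rpow hs.le (by norm_num),
        Real.inv_rpow (by norm_num : (0:ℝ) ≤ 2),
        Real.rpow_neg (by norm_num : (0:ℝ) ≤ 2), inv_inv, mul_comm]
  set Rb := ∫ r in (t-s)..(s/2), r^(ν-α-1) with hRbdef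
  -- the main estimate, for an abstract majorant Y
  have main : ∀ Y : ℝ, 0 < Y →
      (t-s)^ν * (t-s)^(1-α) ≤ Q^2 * Y →
      (t-s)^(1+ν-α) ≤ Q^2 * Y →
      (2*(t-s) < s → (t-s) * (s/2)^(ν-α) ≤ Q * Y) →
      (2*(t-s) < s → (t-s) * Rb ≤ (|α-ν|⁻¹ + 1/ε) * (Q * Y)) →
      ‖(∫ u in (0:ℝ)..t, ((t - u) ^ (-α)) • F u)
          - ∫ u in (0:ℝ)..s, ((s - u) ^ (-α)) • F u‖
        ≤ C * (t ^ (1 - α) - s ^ (1 - α)) + C * s ^ (-μ) * Y := by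
    intro Y hY0 hE2 hEc hEa hEb
    have hσY0 : (0:ℝ) ≤ s^(-μ) * Y := mul_nonneg hσ0.le hY0.le
    have hG3n : ‖∫ u in s..t, (t-u)^(-α) • (F u - F s)‖
        ≤ ((K/(1-α))*Q^2) * (s^(-μ)*Y) := by
      refine le_trans hT2n ?_
      calc (K/(1-α)) * (s^(-μ) * ((t-s)^ν * (t-s)^(1-α)))
          ≤ (K/(1-α)) * (s^(-μ) * (Q^2*Y)) :=
            mul_le_mul_of_nonneg_left (mul_le_mul_of_nonneg_left hE2 hσ0.le) hr1
        _ = ((K/(1-α))*Q^2) * (s^(-μ)*Y) := by ring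
    have hDn : ‖(∫ u in (0:ℝ)..t, ((t - u) ^ (-α)) • F u)
        - ∫ u in (0:ℝ)..s, ((s - u) ^ (-α)) • F u‖
        ≤ ‖∫ u in (0:ℝ)..s, ((t-u)^(-α) - (s-u)^(-α)) • (F u - F s)‖
          + ‖∫ u in s..t, (t-u)^(-α) • (F u - F s)‖
          + (M/(1-α)) * (t^(1-α) - s^(1-α)) := by
      rw [hD]
      refine le_trans (norm_add₃_le) ?_
      exact add_le_add (add_le_add le_rfl le_rfl) hT3n
    rcases lt_or_ge (2*(t-s)) s with hB | hA
    · -- Case B : 2(t-s) < s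
      have hδs2 : t - s < s/2 := by linarith
      have h2s : s/2 < s - (t-s) := by linarith
      have hsd : s - (t-s) < s := by linarith
      have hmset : ∀ a' b' : ℝ, 0 ≤ a' → a' ≤ b' → b' ≤ s →
          IntervalIntegrable (fun u => ((t-u)^(-α) - (s-u)^(-α)) • (F u - F s))
            volume a' b' := by
        intro a' b' h1 h2 h3
        refine hGdI.mono_set ?_
        rw [uIcc_of_le h2, uIcc_of_le hs.le]
        exact Icc_subset_Icc h1 h3
      have hsplit3 : (∫ u in (0:ℝ)..s, ((t-u)^(-α) - (s-u)^(-α)) • (F u - F s))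
          = (∫ u in (0:ℝ)..(s/2), ((t-u)^(-α) - (s-u)^(-α)) • (F u - F s))
            + (∫ u in (s/2)..(s-(t-s)), ((t-u)^(-α) - (s-u)^(-α)) • (F u - F s))
            + (∫ u in (s-(t-s))..s, ((t-u)^(-α) - (s-u)^(-α)) • (F u - F s)) := by
        rw [add_assoc,
            integral_add_adjacent_intervals
              (hmset _ _ (by linarith) (by linarith) (by linarith))
              (hmset _ _ (by linarith) (by linarith) le_rfl),
            integral_add_adjacent_intervals
              (hmset _ _ le_rfl (by linarith) (by linarith))
              (hmset _ _ (by linarith) (by linarith) le_rfl)]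
      -- piece 1
      have hb1 : ‖∫ u in (0:ℝ)..(s/2), ((t-u)^(-α) - (s-u)^(-α)) • (F u - F s)‖
          ≤ (K*α*(t-s)*(s/2)^(ν-α-1)) * ((s/2)^(1-μ)/(1-μ)) := by
        have hint : ∫ u in (0:ℝ)..(s/2), (K*α*(t-s)*(s/2)^(ν-α-1)) * u^(-μ)
            = (K*α*(t-s)*(s/2)^(ν-α-1)) * ((s/2)^(1-μ)/(1-μ)) := by
          rw [intervalIntegral.integral_const_mul,
              integral_rpow (Or.inl (by linarith : (-1:ℝ) < -μ))]
          rw [show -μ + 1 = 1-μ by ring, Real.zero_rpow h1μ.ne']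
          ring
        have hc0 : (0:ℝ) ≤ K*α*(t-s)*(s/2)^(ν-α-1) :=
          mul_nonneg (mul_nonneg (mul_nonneg hK.le hα0.le) hδ0.le)
            (Real.rpow_nonneg hs2.le _)
        refine le_trans (norm_int_le' hs2.le
          (by rw [hint]
              exact mul_nonneg hc0 (div_nonneg (Real.rpow_nonneg hs2.le _) h1μ.le))
          (fun u hu => ?_)
          (((intervalIntegral.intervalIntegrable_rpow'
              (by linarith : (-1:ℝ) < -μ)).const_mul _))) (le_of_eq hint)
        have hu0 : 0 < u := hu.1
        have hus2 : u < s/2 := hu.2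
        have hus : u < s := by linarith
        have hsu : 0 < s - u := by linarith
        have hstu : s - u ≤ t - u := by linarith
        have hd1 : (t-u)^(-α) ≤ (s-u)^(-α) :=
          Real.rpow_le_rpow_of_nonpos hsu hstu (by linarith)
        rw [norm_smul, Real.norm_eq_abs, abs_sub_comm, abs_of_nonneg (by linarith)]
        have hki := key_ineq hα0 hα1 hsu hstu
        rw [show t - u - (s - u) = t - s by ring] at hki
        have hFb : ‖F u - F s‖ ≤ K * u^(-μ) * (s-u)^ν := by
          rw [norm_sub_rev]; exact hF u s hu0 hus hsT
        have hc1 : (0:ℝ) ≤ α*(t-s)*(s-u)^(-α-1) :=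
          mul_nonneg (mul_nonneg hα0.le hδ0.le) (Real.rpow_nonneg hsu.le _)
        calc ((s-u)^(-α) - (t-u)^(-α)) * ‖F u - F s‖
            ≤ (α*(t-s)*(s-u)^(-α-1)) * (K * u^(-μ) * (s-u)^ν) :=
              mul_le_mul hki hFb (norm_nonneg _) hc1
          _ = (K*α*(t-s)) * ((s-u)^(-α-1) * (s-u)^ν) * u^(-μ) := by ring
          _ = (K*α*(t-s)) * (s-u)^(ν-α-1) * u^(-μ) := by
              rw [← Real.rpow_add hsu, show -α-1+ν = ν-α-1 by ring]
          _ ≤ (K*α*(t-s)) * (s/2)^(ν-α-1) * u^(-μ) := by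
              have hmono : (s-u)^(ν-α-1) ≤ (s/2)^(ν-α-1) :=
                Real.rpow_le_rpow_of_nonpos hs2 (by linarith) (by linarith)
              exact mul_le_mul_of_nonneg_right
                (mul_le_mul_of_nonneg_left hmono
                  (mul_nonneg (mul_nonneg hK.le hα0.le) hδ0.le))
                (Real.rpow_nonneg hu0.le _)
          _ = (K*α*(t-s)*(s/2)^(ν-α-1)) * u^(-μ) := by ring
      have hsplitexp : (s/2)^(ν-α-1) * (s/2)^(1-μ) = (s/2)^(ν-α) * (2^μ * s^(-μ)) := by
        rw [← h2μ, ← Real.rpow_add hs2, ← Real.rpow_add hs2]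
        congr 1; ring
      have hb1' : ‖∫ u in (0:ℝ)..(s/2), ((t-u)^(-α) - (s-u)^(-α)) • (F u - F s)‖
          ≤ (K*α*2^μ/(1-μ)) * (s^(-μ) * ((t-s) * (s/2)^(ν-α))) := by
        refine le_trans hb1 (le_of_eq ?_)
        calc (K*α*(t-s)*(s/2)^(ν-α-1)) * ((s/2)^(1-μ)/(1-μ))
            = (K*α*(t-s)/(1-μ)) * ((s/2)^(ν-α-1)*(s/2)^(1-μ)) := by ring
          _ = (K*α*(t-s)/(1-μ)) * ((s/2)^(ν-α) * (2^μ * s^(-μ))) := by rw [hsplitexp]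
          _ = (K*α*2^μ/(1-μ)) * (s^(-μ) * ((t-s) * (s/2)^(ν-α))) := by ring
      have hb1f : ‖∫ u in (0:ℝ)..(s/2), ((t-u)^(-α) - (s-u)^(-α)) • (F u - F s)‖
          ≤ ((K*α*2^μ/(1-μ))*Q) * (s^(-μ)*Y) := by
        refine le_trans hb1' ?_
        calc (K*α*2^μ/(1-μ)) * (s^(-μ) * ((t-s) * (s/2)^(ν-α)))
            ≤ (K*α*2^μ/(1-μ)) * (s^(-μ) * (Q*Y)) :=
              mul_le_mul_of_nonneg_left
                (mul_le_mul_of_nonneg_left (hEa hB) hσ0.le) hr2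
          _ = ((K*α*2^μ/(1-μ))*Q) * (s^(-μ)*Y) := by ring
      -- piece 2
      have h0n : (0:ℝ) ∉ Set.uIcc (t-s) (s/2) := by
        rw [uIcc_of_le hδs2.le]
        exact fun h => absurd h.1 (not_le.mpr hδ0)
      have hIb : IntervalIntegrable (fun u => (s-u)^(ν-α-1)) volume (s/2) (s-(t-s)) := by
        have h := (intervalIntegral.intervalIntegrable_rpow (r := ν-α-1)
          (Or.inr h0n)).comp_sub_left s
        rw [show s - s/2 = s/2 by ring] at h
        exact h.symm
      have hintb : ∫ u in (s/2)..(s-(t-s)), (s-u)^(ν-α-1) = Rb := by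
        rw [hRbdef, intervalIntegral.integral_comp_sub_left (fun r => r^(ν-α-1)) s,
            show s - (s-(t-s)) = t - s by ring, show s - s/2 = s/2 by ring]
      have hRb0 : 0 ≤ Rb := by
        rw [hRbdef]
        exact intervalIntegral.integral_nonneg hδs2.le
          (fun r hr => Real.rpow_nonneg (le_trans hδ0.le hr.1) _)
      have hb2 : ‖∫ u in (s/2)..(s-(t-s)), ((t-u)^(-α) - (s-u)^(-α)) • (F u - F s)‖
          ≤ (K*α*(t-s)*(s/2)^(-μ)) * Rb := by
        have hc0 : (0:ℝ) ≤ K*α*(t-s)*(s/2)^(-μ) :=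
          mul_nonneg (mul_nonneg (mul_nonneg hK.le hα0.le) hδ0.le)
            (Real.rpow_nonneg hs2.le _)
        have hint : ∫ u in (s/2)..(s-(t-s)), (K*α*(t-s)*(s/2)^(-μ)) * (s-u)^(ν-α-1)
            = (K*α*(t-s)*(s/2)^(-μ)) * Rb := by
          rw [intervalIntegral.integral_const_mul, hintb]
        refine le_trans (norm_int_le' h2s.le
          (by rw [hint]; exact mul_nonneg hc0 hRb0)
          (fun u hu => ?_) (hIb.const_mul _)) (le_of_eq hint)
        have hu0 : 0 < u := lt_trans hs2 hu.1
        have hus : u < s := by linarith [hu.2]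
        have hsu : 0 < s - u := by linarith
        have hstu : s - u ≤ t - u := by linarith
        have hd1 : (t-u)^(-α) ≤ (s-u)^(-α) :=
          Real.rpow_le_rpow_of_nonpos hsu hstu (by linarith)
        rw [norm_smul, Real.norm_eq_abs, abs_sub_comm, abs_of_nonneg (by linarith)]
        have hki := key_ineq hα0 hα1 hsu hstu
        rw [show t - u - (s - u) = t - s by ring] at hki
        have hFb : ‖F u - F s‖ ≤ K * u^(-μ) * (s-u)^ν := by
          rw [norm_sub_rev]; exact hF u s hu0 hus hsT
        have hc1 : (0:ℝ) ≤ α*(t-s)*(s-u)^(-α-1) :=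
          mul_nonneg (mul_nonneg hα0.le hδ0.le) (Real.rpow_nonneg hsu.le _)
        calc ((s-u)^(-α) - (t-u)^(-α)) * ‖F u - F s‖
            ≤ (α*(t-s)*(s-u)^(-α-1)) * (K * u^(-μ) * (s-u)^ν) :=
              mul_le_mul hki hFb (norm_nonneg _) hc1
          _ = (K*α*(t-s)) * u^(-μ) * ((s-u)^(-α-1) * (s-u)^ν) := by ring
          _ = (K*α*(t-s)) * u^(-μ) * (s-u)^(ν-α-1) := by
              rw [← Real.rpow_add hsu, show -α-1+ν = ν-α-1 by ring]
          _ ≤ (K*α*(t-s)) * (s/2)^(-μ) * (s-u)^(ν-α-1) := by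
              have hmono : u^(-μ) ≤ (s/2)^(-μ) :=
                Real.rpow_le_rpow_of_nonpos hs2 hu.1.le (by linarith)
              exact mul_le_mul_of_nonneg_right
                (mul_le_mul_of_nonneg_left hmono
                  (mul_nonneg (mul_nonneg hK.le hα0.le) hδ0.le))
                (Real.rpow_nonneg hsu.le _)
          _ = (K*α*(t-s)*(s/2)^(-μ)) * (s-u)^(ν-α-1) := by ring
      have hb2f : ‖∫ u in (s/2)..(s-(t-s)), ((t-u)^(-α) - (s-u)^(-α)) • (F u - F s)‖
          ≤ ((K*α*2^μ*(|α-ν|⁻¹ + 1/ε))*Q) * (s^(-μ)*Y) := by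
        refine le_trans hb2 ?_
        have h1 : (K*α*(t-s)*(s/2)^(-μ))*Rb = (K*α*2^μ) * (s^(-μ) * ((t-s)*Rb)) := by
          rw [h2μ]; ring
        rw [h1]
        calc (K*α*2^μ) * (s^(-μ) * ((t-s)*Rb))
            ≤ (K*α*2^μ) * (s^(-μ) * ((|α-ν|⁻¹ + 1/ε) * (Q*Y))) :=
              mul_le_mul_of_nonneg_left
                (mul_le_mul_of_nonneg_left (hEb hB) hσ0.le) (by positivity)
          _ = ((K*α*2^μ*(|α-ν|⁻¹ + 1/ε))*Q) * (s^(-μ)*Y) := by ring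
      -- piece 3
      have hb3 : ‖∫ u in (s-(t-s))..s, ((t-u)^(-α) - (s-u)^(-α)) • (F u - F s)‖
          ≤ (K*(s/2)^(-μ)) * ((t-s)^(1+ν-α)/(1+ν-α)) := by
        have hint : ∫ u in (s-(t-s))..s, (K*(s/2)^(-μ)) * (s-u)^(ν-α)
            = (K*(s/2)^(-μ)) * ((t-s)^(1+ν-α)/(1+ν-α)) := by
          rw [intervalIntegral.integral_const_mul,
              int_rpow_sub (by linarith : (-1:ℝ) < ν-α) s _ _,
              show s - (s-(t-s)) = t - s by ring, sub_self,
              Real.zero_rpow (by linarith : ν-α+1 ≠ 0),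
              show ν-α+1 = 1+ν-α by ring]
          ring
        have hc0 : (0:ℝ) ≤ K*(s/2)^(-μ) := mul_nonneg hK.le (Real.rpow_nonneg hs2.le _)
        refine le_trans (norm_int_le' hsd.le
          (by rw [hint]
              exact mul_nonneg hc0 (div_nonneg (Real.rpow_nonneg hδ0.le _) h1να.le))
          (fun u hu => ?_)
          ((II_rpow_sub (by linarith : (-1:ℝ) < ν-α) s _ _).const_mul _))
          (le_of_eq hint)
        have hu0 : 0 < u := by linarith [hu.1]
        have hus : u < s := hu.2
        have hsu : 0 < s - u := by linarith
        have hstu : s - u ≤ t - u := by linarith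
        have htu0 : (0:ℝ) ≤ (t-u)^(-α) := Real.rpow_nonneg (by linarith) _
        have hd1 : (t-u)^(-α) ≤ (s-u)^(-α) :=
          Real.rpow_le_rpow_of_nonpos hsu hstu (by linarith)
        rw [norm_smul, Real.norm_eq_abs, abs_sub_comm, abs_of_nonneg (by linarith)]
        have hFb : ‖F u - F s‖ ≤ K * u^(-μ) * (s-u)^ν := by
          rw [norm_sub_rev]; exact hF u s hu0 hus hsT
        calc ((s-u)^(-α) - (t-u)^(-α)) * ‖F u - F s‖
            ≤ (s-u)^(-α) * (K * u^(-μ) * (s-u)^ν) := by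
              refine mul_le_mul (by linarith) hFb (norm_nonneg _)
                (Real.rpow_nonneg hsu.le _)
          _ = K * u^(-μ) * ((s-u)^(-α) * (s-u)^ν) := by ring
          _ = K * u^(-μ) * (s-u)^(ν-α) := by
              rw [← Real.rpow_add hsu, show -α+ν = ν-α by ring]
          _ ≤ K * (s/2)^(-μ) * (s-u)^(ν-α) := by
              have hmono : u^(-μ) ≤ (s/2)^(-μ) :=
                Real.rpow_le_rpow_of_nonpos hs2 (by linarith [hu.1]) (by linarith)
              exact mul_le_mul_of_nonneg_right
                (mul_le_mul_of_nonneg_left hmono hK.le)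
                (Real.rpow_nonneg hsu.le _)
          _ = (K*(s/2)^(-μ)) * (s-u)^(ν-α) := by ring
      have hb3f : ‖∫ u in (s-(t-s))..s, ((t-u)^(-α) - (s-u)^(-α)) • (F u - F s)‖
          ≤ ((K*2^μ/(1+ν-α))*Q^2) * (s^(-μ)*Y) := by
        refine le_trans hb3 ?_
        have h1 : (K*(s/2)^(-μ)) * ((t-s)^(1+ν-α)/(1+ν-α))
            = (K*2^μ/(1+ν-α)) * (s^(-μ) * (t-s)^(1+ν-α)) := by
          rw [h2μ]; ring
        rw [h1]
        calc (K*2^μ/(1+ν-α)) * (s^(-μ) * (t-s)^(1+ν-α))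
            ≤ (K*2^μ/(1+ν-α)) * (s^(-μ) * (Q^2*Y)) :=
              mul_le_mul_of_nonneg_left (mul_le_mul_of_nonneg_left hEc hσ0.le) hr4
          _ = ((K*2^μ/(1+ν-α))*Q^2) * (s^(-μ)*Y) := by ring
      have hGdn : ‖∫ u in (0:ℝ)..s, ((t-u)^(-α) - (s-u)^(-α)) • (F u - F s)‖
          ≤ ((K*α*2^μ/(1-μ))*Q) * (s^(-μ)*Y)
            + ((K*α*2^μ*(|α-ν|⁻¹ + 1/ε))*Q) * (s^(-μ)*Y)
            + ((K*2^μ/(1+ν-α))*Q^2) * (s^(-μ)*Y) := by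
        rw [hsplit3]
        refine le_trans (norm_add₃_le) ?_
        exact add_le_add (add_le_add hb1f hb2f) hb3f
      have hfin := le_trans hDn (add_le_add (add_le_add hGdn hG3n) le_rfl)
      have h1 : M/(1-α) ≤ C := by rw [hCdef]; linarith only [hQsum0, hA1]
      have hh1 := mul_le_mul_of_nonneg_right hcB hσY0
      have hh2 := mul_le_mul_of_nonneg_right h1 hX0
      refine le_trans hfin ?_
      exact le_trans (le_of_eq (by ring))
        (le_trans (add_le_add hh1 hh2) (le_of_eq (by ring)))
    · -- Case A : s ≤ 2(t-s)
      have hGdn : ‖∫ u in (0:ℝ)..s, ((t-u)^(-α) - (s-u)^(-α)) • (F u - F s)‖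
          ≤ (2*M) * ((s^(1-α) - (t^(1-α) - (t-s)^(1-α)))/(1-α)) := by
        have hint : ∫ u in (0:ℝ)..s, (2*M) * ((s-u)^(-α) - (t-u)^(-α))
            = (2*M) * ((s^(1-α) - (t^(1-α) - (t-s)^(1-α)))/(1-α)) := by
          rw [intervalIntegral.integral_const_mul, intervalIntegral.integral_sub hS2 hS1,
              int_rpow_sub_γ hα1 s 0 s, int_rpow_sub_γ hα1 t 0 s]
          simp only [sub_zero, sub_self, Real.zero_rpow hγne]
          ring
        have hsub : t^(1-α) ≤ s^(1-α) + (t-s)^(1-α) := by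
          have h := rpow_subadd hs.le hδ0.le hγ0.le (by linarith)
          rwa [show s + (t-s) = t by ring] at h
        refine le_trans (norm_int_le' hs.le
          (by rw [hint]
              exact mul_nonneg (by linarith) (div_nonneg (by linarith) hγ0.le))
          (fun u hu => ?_)
          (((II_rpow_sub hrα s 0 s).sub (II_rpow_sub hrα t 0 s)).const_mul _))
          (le_of_eq hint)
        have hu0 : 0 < u := hu.1
        have hus : u < s := hu.2
        have hsu : 0 < s - u := by linarith
        have hstu : s - u ≤ t - u := by linarith
        have hd1 : (t-u)^(-α) ≤ (s-u)^(-α) :=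
          Real.rpow_le_rpow_of_nonpos hsu hstu (by linarith)
        rw [norm_smul, Real.norm_eq_abs, abs_sub_comm, abs_of_nonneg (by linarith)]
        have hFb : ‖F u - F s‖ ≤ 2*M := by
          refine le_trans (norm_sub_le _ _) ?_
          have h1 := hM u ⟨hu0.le, by linarith⟩
          have h2 := hM s ⟨hs.le, hsT⟩
          linarith
        calc ((s-u)^(-α) - (t-u)^(-α)) * ‖F u - F s‖
            ≤ ((s-u)^(-α) - (t-u)^(-α)) * (2*M) :=
              mul_le_mul_of_nonneg_left hFb (by linarith)
          _ = (2*M) * ((s-u)^(-α) - (t-u)^(-α)) := mul_comm _ _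
      -- (t-s)^(1-α) ≲ X in this case
      have ht3 : t ≤ 3*(t-s) := by linarith
      have hint2 : ∫ u in s..t, u^(-α) = (t^(1-α) - s^(1-α))/(1-α) := by
        rw [integral_rpow (Or.inl hrα), show -α + 1 = 1-α by ring]
      have hmono : ∫ u in s..t, (t:ℝ)^(-α) ≤ ∫ u in s..t, u^(-α) := by
        refine intervalIntegral.integral_mono_on hst.le intervalIntegrable_const
          (intervalIntegral.intervalIntegrable_rpow' hrα) (fun x hx => ?_)
        exact Real.rpow_le_rpow_of_nonpos (lt_of_lt_of_le hs hx.1) hx.2 (by linarith)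
      have hlow : (t-s) * t^(-α) ≤ (t^(1-α) - s^(1-α))/(1-α) := by
        rw [← hint2]
        rwa [intervalIntegral.integral_const, smul_eq_mul] at hmono
      have ht3' : (3*(t-s))^(-α) ≤ t^(-α) :=
        Real.rpow_le_rpow_of_nonpos ht0 ht3 (by linarith)
      have hmulr : (3*(t-s))^(-α) = 3^(-α) * (t-s)^(-α) :=
        Real.mul_rpow (by norm_num) hδ0.le
      have hδexp : (t-s)^(1-α) = (t-s) * (t-s)^(-α) := by
        rw [show (1:ℝ)-α = 1 + (-α) by ring, Real.rpow_add hδ0, Real.rpow_one]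
      have hkey : 3^(-α) * (t-s)^(1-α) ≤ (t^(1-α)-s^(1-α))/(1-α) := by
        calc 3^(-α)*(t-s)^(1-α) = (t-s)*((3*(t-s))^(-α)) := by
              rw [hmulr, hδexp]; ring
          _ ≤ (t-s)*t^(-α) := mul_le_mul_of_nonneg_left ht3' hδ0.le
          _ ≤ _ := hlow
      have h33 : (3:ℝ)^α * 3^(-α) = 1 := by
        rw [← Real.rpow_add (by norm_num : (0:ℝ) < 3)]; simp
      have hXδ : (t-s)^(1-α) ≤ (3^α/(1-α))*(t^(1-α)-s^(1-α)) := by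
        have h3a : (0:ℝ) < (3:ℝ)^α := Real.rpow_pos_of_pos (by norm_num) _
        have hmm := mul_le_mul_of_nonneg_left hkey h3a.le
        calc (t-s)^(1-α) = 3^α*(3^(-α)*(t-s)^(1-α)) := by
              rw [← mul_assoc, h33, one_mul]
          _ ≤ 3^α*((t^(1-α)-s^(1-α))/(1-α)) := hmm
          _ = (3^α/(1-α))*(t^(1-α)-s^(1-α)) := by ring
      have hsub : t^(1-α) ≤ s^(1-α) + (t-s)^(1-α) := by
        have h := rpow_subadd hs.le hδ0.le hγ0.le (by linarith)
        rwa [show s + (t-s) = t by ring] at h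
      have hss : s^(1-α) ≤ t^(1-α) := Real.rpow_le_rpow hs.le hst.le hγ0.le
      have hGdn2 : ‖∫ u in (0:ℝ)..s, ((t-u)^(-α) - (s-u)^(-α)) • (F u - F s)‖
          ≤ ((2*M/(1-α))*(3^α/(1-α))) * (t^(1-α)-s^(1-α)) := by
        refine le_trans hGdn ?_
        calc (2*M) * ((s^(1-α) - (t^(1-α) - (t-s)^(1-α)))/(1-α))
            ≤ (2*M) * ((t-s)^(1-α)/(1-α)) := by
              refine mul_le_mul_of_nonneg_left ?_ (by linarith)
              exact (div_le_div_iff_of_pos_right hγ0).mpr (by linarith)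
          _ = (2*M/(1-α)) * (t-s)^(1-α) := by ring
          _ ≤ (2*M/(1-α)) * ((3^α/(1-α))*(t^(1-α)-s^(1-α))) :=
              mul_le_mul_of_nonneg_left hXδ (div_nonneg (by linarith) hγ0.le)
          _ = ((2*M/(1-α))*(3^α/(1-α))) * (t^(1-α)-s^(1-α)) := by ring
      have hfin := le_trans hDn (add_le_add (add_le_add hGdn2 hG3n) le_rfl)
      have hh1 := mul_le_mul_of_nonneg_right hcB1 hσY0
      have hh2 := mul_le_mul_of_nonneg_right hcA hX0
      refine le_trans hfin ?_
      exact le_trans (le_of_eq (by ring))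
        (le_trans (add_le_add hh1 hh2) (le_of_eq (by ring)))
  -- endgames
  constructor
  · intro hne
    rcases hne.lt_or_gt with hlt | hgt
    · -- ν < α
      have hmin : min (1-α+ν) 1 = 1-α+ν := min_eq_left (by linarith)
      rw [hmin]
      have hY0 : 0 < (t-s)^(1-α+ν) := Real.rpow_pos_of_pos hδ0 _
      have hYnn : (0:ℝ) ≤ (t-s)^(1-α+ν) := hY0.le
      have hE2 : (t-s)^ν * (t-s)^(1-α) ≤ Q^2 * (t-s)^(1-α+ν) := by
        calc (t-s)^ν * (t-s)^(1-α) = (t-s)^(ν+(1-α)) := (Real.rpow_add hδ0 _ _).symm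
          _ ≤ Q^2 * (t-s)^(1-α+ν) := hpow _ _ (by linarith) (by linarith)
      have hEc : (t-s)^(1+ν-α) ≤ Q^2 * (t-s)^(1-α+ν) :=
        hpow _ _ (by linarith) (by linarith)
      have hEa : 2*(t-s) < s → (t-s) * (s/2)^(ν-α) ≤ Q * (t-s)^(1-α+ν) := by
        intro hB
        have h1 : (s/2)^(ν-α) ≤ (t-s)^(ν-α) :=
          Real.rpow_le_rpow_of_nonpos hδ0 (by linarith) (by linarith)
        calc (t-s)*(s/2)^(ν-α) ≤ (t-s)*(t-s)^(ν-α) :=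
              mul_le_mul_of_nonneg_left h1 hδ0.le
          _ = (t-s)^(1-α+ν) := by
              rw [show (1:ℝ)-α+ν = 1+(ν-α) by ring, Real.rpow_add hδ0, Real.rpow_one]
          _ ≤ Q*(t-s)^(1-α+ν) := le_mul_of_one_le_left hYnn hQ1
      have hEb : 2*(t-s) < s → (t-s) * Rb ≤ (|α-ν|⁻¹ + 1/ε) * (Q * (t-s)^(1-α+ν)) := by
        intro hB
        have hδs2 : t - s < s/2 := by linarith
        have h0n : (0:ℝ) ∉ Set.uIcc (t-s) (s/2) := by
          rw [uIcc_of_le hδs2.le]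
          exact fun h => absurd h.1 (not_le.mpr hδ0)
        have hRbval : Rb = ((s/2)^(ν-α) - (t-s)^(ν-α))/(ν-α) := by
          rw [hRbdef, integral_rpow (Or.inr ⟨fun h => hlt.ne (by linarith), h0n⟩), show ν-α-1+1 = ν-α by ring]
        have hαν : (0:ℝ) < α - ν := by linarith
        have habs : |α-ν| = α-ν := abs_of_pos hαν
        have hRble : Rb ≤ (t-s)^(ν-α) * (α-ν)⁻¹ := by
          rw [hRbval]
          rw [div_eq_mul_inv]
          have h1 : ((s/2)^(ν-α) - (t-s)^(ν-α)) * (ν-α)⁻¹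
              = ((t-s)^(ν-α) - (s/2)^(ν-α)) * (α-ν)⁻¹ := by
            rw [show α-ν = -(ν-α) by ring, inv_neg]
            ring
          rw [h1]
          refine mul_le_mul_of_nonneg_right ?_ (by positivity)
          linarith [Real.rpow_nonneg hs2.le (ν-α)]
        have hYeq : (t-s) * (t-s)^(ν-α) = (t-s)^(1-α+ν) := by
          rw [show (1:ℝ)-α+ν = 1+(ν-α) by ring, Real.rpow_add hδ0, Real.rpow_one]
        calc (t-s)*Rb ≤ (t-s)*((t-s)^(ν-α) * (α-ν)⁻¹) :=
              mul_le_mul_of_nonneg_left hRble hδ0.le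
          _ = (α-ν)⁻¹ * (t-s)^(1-α+ν) := by rw [← hYeq]; ring
          _ = |α-ν|⁻¹ * (t-s)^(1-α+ν) := by rw [habs]
          _ ≤ |α-ν|⁻¹ * (Q * (t-s)^(1-α+ν)) :=
              mul_le_mul_of_nonneg_left (le_mul_of_one_le_left hYnn hQ1)
                (inv_nonneg.mpr (abs_nonneg _))
          _ ≤ (|α-ν|⁻¹ + 1/ε) * (Q * (t-s)^(1-α+ν)) := by
              have h9 : (0:ℝ) ≤ 1/ε * (Q * (t-s)^(1-α+ν)) := by positivity
              rw [add_mul]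
              linarith only [h9]
      have h := main _ hY0 hE2 hEc hEa hEb
      refine le_trans h (le_of_eq (by ring))
    · -- ν > α
      have hmin : min (1-α+ν) 1 = 1 := min_eq_right (by linarith)
      rw [hmin, Real.rpow_one]
      have hE2 : (t-s)^ν * (t-s)^(1-α) ≤ Q^2 * (t-s) := by
        have h1 : (t-s)^ν * (t-s)^(1-α) = (t-s)^(ν+(1-α)) := (Real.rpow_add hδ0 _ _).symm
        have h2 : (t-s)^(ν+(1-α)) ≤ Q^2 * (t-s)^(1:ℝ) :=
          hpow _ _ (by linarith) (by linarith)
        rw [Real.rpow_one] at h2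
        rw [h1]; exact h2
      have hEc : (t-s)^(1+ν-α) ≤ Q^2 * (t-s) := by
        have h2 : (t-s)^(1+ν-α) ≤ Q^2 * (t-s)^(1:ℝ) :=
          hpow _ _ (by linarith) (by linarith)
        rwa [Real.rpow_one] at h2
      have hEa : 2*(t-s) < s → (t-s) * (s/2)^(ν-α) ≤ Q * (t-s) := by
        intro hB
        have h1 : (s/2)^(ν-α) ≤ Q^(ν-α) :=
          Real.rpow_le_rpow hs2.le hs2Q (by linarith)
        have h2 : Q^(ν-α) ≤ Q^(1:ℝ) :=
          Real.rpow_le_rpow_of_exponent_le hQ1 (by linarith)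
        rw [Real.rpow_one] at h2
        calc (t-s)*(s/2)^(ν-α) ≤ (t-s)*Q :=
              mul_le_mul_of_nonneg_left (le_trans h1 h2) hδ0.le
          _ = Q*(t-s) := mul_comm _ _
      have hEb : 2*(t-s) < s → (t-s) * Rb ≤ (|α-ν|⁻¹ + 1/ε) * (Q * (t-s)) := by
        intro hB
        have hδs2 : t - s < s/2 := by linarith
        have h0n : (0:ℝ) ∉ Set.uIcc (t-s) (s/2) := by
          rw [uIcc_of_le hδs2.le]
          exact fun h => absurd h.1 (not_le.mpr hδ0)
        have hRbval : Rb = ((s/2)^(ν-α) - (t-s)^(ν-α))/(ν-α) := by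
          rw [hRbdef, integral_rpow (Or.inr ⟨fun h => hgt.ne' (by linarith), h0n⟩), show ν-α-1+1 = ν-α by ring]
        have hαν : (0:ℝ) < ν - α := by linarith
        have habs : |α-ν| = ν-α := by rw [abs_sub_comm]; exact abs_of_pos hαν
        have h1 : (s/2)^(ν-α) ≤ Q := by
          have ha : (s/2)^(ν-α) ≤ Q^(ν-α) :=
            Real.rpow_le_rpow hs2.le hs2Q (by linarith)
          have hb2 : Q^(ν-α) ≤ Q^(1:ℝ) :=
            Real.rpow_le_rpow_of_exponent_le hQ1 (by linarith)
          rw [Real.rpow_one] at hb2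
          exact le_trans ha hb2
        have hRble : Rb ≤ Q * (ν-α)⁻¹ := by
          rw [hRbval, div_eq_mul_inv]
          refine mul_le_mul_of_nonneg_right ?_ (by positivity)
          linarith [Real.rpow_nonneg hδ0.le (ν-α)]
        calc (t-s)*Rb ≤ (t-s)*(Q * (ν-α)⁻¹) :=
              mul_le_mul_of_nonneg_left hRble hδ0.le
          _ = (ν-α)⁻¹ * (Q * (t-s)) := by ring
          _ = |α-ν|⁻¹ * (Q * (t-s)) := by rw [habs]
          _ ≤ (|α-ν|⁻¹ + 1/ε) * (Q * (t-s)) := by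
              have h9 : (0:ℝ) ≤ 1/ε * (Q * (t-s)) := by positivity
              rw [add_mul]
              linarith only [h9]
      have h := main _ hδ0 hE2 hEc hEa hEb
      refine le_trans h (le_of_eq (by ring))
  · intro heq
    have hY0 : 0 < (t-s)^(1-ε) := Real.rpow_pos_of_pos hδ0 _
    have hYnn : (0:ℝ) ≤ (t-s)^(1-ε) := hY0.le
    have hνα : ν - α = 0 := by rw [heq]; ring
    have hE2 : (t-s)^ν * (t-s)^(1-α) ≤ Q^2 * (t-s)^(1-ε) := by
      calc (t-s)^ν * (t-s)^(1-α) = (t-s)^(ν+(1-α)) := (Real.rpow_add hδ0 _ _).symm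
        _ ≤ Q^2 * (t-s)^(1-ε) := hpow _ _ (by rw [heq]; linarith) (by rw [heq]; linarith)
    have hEc : (t-s)^(1+ν-α) ≤ Q^2 * (t-s)^(1-ε) :=
      hpow _ _ (by rw [heq]; linarith) (by rw [heq]; linarith)
    have hδQε : (t-s)^ε ≤ Q := by
      have h1 : (t-s)^ε ≤ Q^ε := Real.rpow_le_rpow hδ0.le hδQ hε0.le
      have h2 : Q^ε ≤ Q^(1:ℝ) := Real.rpow_le_rpow_of_exponent_le hQ1 (by linarith)
      rw [Real.rpow_one] at h2
      exact le_trans h1 h2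
    have hδsplit : (t-s) = (t-s)^(1-ε) * (t-s)^ε := by
      rw [← Real.rpow_add hδ0, show (1:ℝ)-ε+ε = 1 by ring, Real.rpow_one]
    have hEa : 2*(t-s) < s → (t-s) * (s/2)^(ν-α) ≤ Q * (t-s)^(1-ε) := by
      intro hB
      rw [hνα, Real.rpow_zero, mul_one]
      calc (t-s) = (t-s)^(1-ε) * (t-s)^ε := hδsplit
        _ ≤ (t-s)^(1-ε) * Q := mul_le_mul_of_nonneg_left hδQε hYnn
        _ = Q * (t-s)^(1-ε) := mul_comm _ _
    have hEb : 2*(t-s) < s → (t-s) * Rb ≤ (|α-ν|⁻¹ + 1/ε) * (Q * (t-s)^(1-ε)) := by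
      intro hB
      have hδs2 : t - s < s/2 := by linarith
      have h0n : (0:ℝ) ∉ Set.uIcc (t-s) (s/2) := by
        rw [uIcc_of_le hδs2.le]
        exact fun h => absurd h.1 (not_le.mpr hδ0)
      have hRbval : Rb = Real.log ((s/2)/(t-s)) := by
        rw [hRbdef, show ν-α-1 = -1 by rw [heq]; ring]
        simp only [Real.rpow_neg_one]
        exact integral_inv h0n
      have hlog : Real.log ((s/2)/(t-s)) ≤ ((s/2)/(t-s))^ε / ε :=
        Real.log_le_rpow_div (by positivity) hε0
      have hdivle : ((s/2)/(t-s))^ε ≤ (Q/(t-s))^ε := by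
        refine Real.rpow_le_rpow (by positivity) ?_ hε0.le
        exact (div_le_div_iff_of_pos_right hδ0).mpr hs2Q
      have hQdiv : (Q/(t-s))^ε = Q^ε * (t-s)^(-ε) := by
        rw [Real.div_rpow hQ0.le hδ0.le, Real.rpow_neg hδ0.le, div_eq_mul_inv]
      have hQε : Q^ε ≤ Q := by
        have h2 : Q^ε ≤ Q^(1:ℝ) := Real.rpow_le_rpow_of_exponent_le hQ1 (by linarith)
        rwa [Real.rpow_one] at h2
      have hRble : Rb ≤ Q * (t-s)^(-ε) / ε := by
        rw [hRbval]
        refine le_trans hlog ?_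
        rw [hQdiv] at hdivle
        have h3 : ((s/2)/(t-s))^ε / ε ≤ (Q^ε * (t-s)^(-ε))/ε :=
          (div_le_div_iff_of_pos_right hε0).mpr hdivle
        refine le_trans h3 ?_
        have h4 : Q^ε * (t-s)^(-ε) ≤ Q * (t-s)^(-ε) :=
          mul_le_mul_of_nonneg_right hQε (Real.rpow_nonneg hδ0.le _)
        exact (div_le_div_iff_of_pos_right hε0).mpr h4
      have hcomb : (t-s) * (Q * (t-s)^(-ε) / ε) = (1/ε) * (Q * (t-s)^(1-ε)) := by
        have h5 : (t-s) * (t-s)^(-ε) = (t-s)^(1-ε) := by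
          rw [show (1:ℝ)-ε = 1 + (-ε) by ring, Real.rpow_add hδ0, Real.rpow_one]
        rw [← h5]; ring
      calc (t-s)*Rb ≤ (t-s)*(Q * (t-s)^(-ε) / ε) :=
            mul_le_mul_of_nonneg_left hRble hδ0.le
        _ = (1/ε) * (Q * (t-s)^(1-ε)) := hcomb
        _ ≤ (|α-ν|⁻¹ + 1/ε) * (Q * (t-s)^(1-ε)) := by
            have h9 : (0:ℝ) ≤ |α-ν|⁻¹ * (Q * (t-s)^(1-ε)) := by positivity
            rw [add_mul]
            linarith only [h9]
    have h := main _ hY0 hE2 hEc hEa hEb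
    refine le_trans h (le_of_eq (by ring))
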